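/- Let f : ℝ → ℝ be continuous on [a,b] with a < b, and let c ∈ (a,b). Let P_c be the two-piece linear interpolant of f with breakpoint c, i.e. P_c = L_{a,c} on [a,c] and P_c = L_{c,b} on [c,b]. Then ∫_a^b (f(x) - P_c(x)) dx = ∫_a^b (f(x) - L_{a,b}(x)) dx - (1/2)·(b-a)·(f(c) - L_{a,b}(c)). In particular, for strictly concave f, the area difference error ∫_a^b (f - P_c) is minimized over c ∈ (a,b) exactly at the unique maximizer of f(x) - L_{a,b}(x) on [a,b]. -/
import Mathlib


/-- The secant line of `f` through `(u, f u)` and `(v, f v)`. -/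
noncomputable def secant (f : ℝ → ℝ) (u v : ℝ) (x : ℝ) : ℝ :=
  f u + ((f v - f u) / (v - u)) * (x - u)

/-- The maximum absolute error of the secant approximation of `f` on `[u, v]`:
`E(u,v) = sup_{x ∈ [u,v]} (f x - L_{u,v} x)`. -/
noncomputable def maxErr (f : ℝ → ℝ) (u v : ℝ) : ℝ :=
  sSup ((fun x => f x - secant f u v x) '' Set.Icc u v)

lemma secant_cont (f : ℝ → ℝ) (u v : ℝ) : Continuous (secant f u v) := by
  unfold secant; continuity

lemma integral_secant (f : ℝ → ℝ) (u v : ℝ) (h : u ≠ v) :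
    ∫ x in u..v, secant f u v x = (v - u) * (f u + f v) / 2 := by
  have key : ∀ x, secant f u v x = (f u - ((f v - f u)/(v-u))*u) + ((f v - f u)/(v-u)) * x := by
    intro x; unfold secant; ring
  have hint2 : IntervalIntegrable (fun x => (f v - f u)/(v-u) * x) MeasureTheory.volume u v := by
    apply Continuous.intervalIntegrable; continuity
  simp_rw [key]
  rw [intervalIntegral.integral_add intervalIntegrable_const hint2,
    intervalIntegral.integral_const, intervalIntegral.integral_const_mul, integral_id]
  have hvu : v - u ≠ 0 := sub_ne_zero.mpr (Ne.symm h)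
  simp only [smul_eq_mul]
  field_simp
  ring

lemma integral_err (f : ℝ → ℝ) (u v : ℝ) (huv : u < v) (hf : ContinuousOn f (Set.Icc u v)) :
    ∫ x in u..v, (f x - secant f u v x) =
      (∫ x in u..v, f x) - (v - u) * (f u + f v) / 2 := by
  rw [intervalIntegral.integral_sub (hf.intervalIntegrable_of_Icc huv.le)
    ((secant_cont f u v).intervalIntegrable u v), integral_secant f u v huv.ne]

open intervalIntegral in
/-- Area identity for the two-piece linear interpolant and, for
strictly concave `f`, characterization of the minimizing breakpoint as the unique
maximizer of `f - L_{a,b}`. -/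
theorem area_difference_identity (f : ℝ → ℝ) (a b : ℝ) (hab : a < b)
    (hf : ContinuousOn f (Set.Icc a b)) :
    (∀ c ∈ Set.Ioo a b,
      (∫ x in a..c, (f x - secant f a c x)) + (∫ x in c..b, (f x - secant f c b x)) =
      (∫ x in a..b, (f x - secant f a b x)) - (1 / 2) * (b - a) * (f c - secant f a b c)) ∧
    (StrictConcaveOn ℝ (Set.Icc a b) f →
      ∀ c₀ ∈ Set.Ioo a b,
        IsMaxOn (fun x => f x - secant f a b x) (Set.Icc a b) c₀ →
        ∀ c ∈ Set.Ioo a b,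
          ((∫ x in a..c₀, (f x - secant f a c₀ x)) + (∫ x in c₀..b, (f x - secant f c₀ b x)) ≤
           (∫ x in a..c, (f x - secant f a c x)) + (∫ x in c..b, (f x - secant f c b x))) ∧
          ((∫ x in a..c, (f x - secant f a c x)) + (∫ x in c..b, (f x - secant f c b x)) ≤
           (∫ x in a..c₀, (f x - secant f a c₀ x)) + (∫ x in c₀..b, (f x - secant f c₀ b x)) →
            c = c₀)) := by
  have hba : b - a ≠ 0 := sub_ne_zero.mpr hab.ne'
  have key : ∀ c ∈ Set.Ioo a b,
      (∫ x in a..c, (f x - secant f a c x)) + (∫ x in c..b, (f x - secant f c b x)) =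
      (∫ x in a..b, (f x - secant f a b x)) - (1 / 2) * (b - a) * (f c - secant f a b c) := by
    intro c hc
    obtain ⟨hac, hcb⟩ := hc
    have hfa : ContinuousOn f (Set.Icc a c) := hf.mono (Set.Icc_subset_Icc le_rfl hcb.le)
    have hfb : ContinuousOn f (Set.Icc c b) := hf.mono (Set.Icc_subset_Icc hac.le le_rfl)
    rw [integral_err f a c hac hfa, integral_err f c b hcb hfb, integral_err f a b hab hf,
      ← intervalIntegral.integral_add_adjacent_intervals
        (hfa.intervalIntegrable_of_Icc hac.le) (hfb.intervalIntegrable_of_Icc hcb.le)]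
    unfold secant
    field_simp
    ring
  refine ⟨key, ?_⟩
  intro hconc c₀ hc₀ hmax c hc
  set h : ℝ → ℝ := fun x => f x - secant f a b x with hh
  have hk : 0 < (1 / 2 : ℝ) * (b - a) := by
    have := sub_pos.mpr hab; linarith
  have hcI : c ∈ Set.Icc a b := ⟨hc.1.le, hc.2.le⟩
  have hc₀I : c₀ ∈ Set.Icc a b := ⟨hc₀.1.le, hc₀.2.le⟩
  have hle : h c ≤ h c₀ := hmax hcI
  constructor
  · rw [key c hc, key c₀ hc₀]
    have : (1 / 2) * (b - a) * h c ≤ (1 / 2) * (b - a) * h c₀ :=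
      mul_le_mul_of_nonneg_left hle hk.le
    simp only [hh] at this ⊢
    linarith
  · intro hineq
    rw [key c hc, key c₀ hc₀] at hineq
    have hge : h c₀ ≤ h c := by
      have h2 : (1 / 2) * (b - a) * h c₀ ≤ (1 / 2) * (b - a) * h c := by
        simp only [hh]; linarith
      exact le_of_mul_le_mul_left h2 hk
    have heq : h c = h c₀ := le_antisymm hle hge
    by_contra hne
    set m : ℝ := (1/2 : ℝ) • c + (1/2 : ℝ) • c₀ with hm
    have hmm : m = (c + c₀) / 2 := by simp [hm]; ring
    have hmI : m ∈ Set.Icc a b := by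
      constructor <;> rw [hmm] <;> [linarith [hc.1, hc₀.1]; linarith [hc.2, hc₀.2]]
    have hstrict := hconc.2 hcI hc₀I hne one_half_pos one_half_pos (by norm_num)
    have hfm : (f c + f c₀) / 2 < f m := by
      simp only [smul_eq_mul] at hstrict
      have hmme : (1/2:ℝ) * c + (1/2:ℝ) * c₀ = m := by rw [hmm]; ring
      rw [hmme] at hstrict; linarith
    have hsec : secant f a b m = (secant f a b c + secant f a b c₀) / 2 := by
      unfold secant; rw [hmm]; ring
    have : h c₀ < h m := by
      simp only [hh, hsec]
      have := heq
      simp only [hh] at this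
      linarith
    exact absurd (hmax hmI) (not_le.mpr this)
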